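/- Let M be an n×n symmetric real matrix whose comparison matrix M̄ is positive semidefinite, and let i be an index with m_{ii} > 0. Then the comparison matrix of the Schur complement (M/m_{ii}) is positive semidefinite. -/

import Mathlib

open Matrix

/-- The comparison matrix of a square matrix. -/
def comparisonMatrix {n : Type*} [DecidableEq n] (M : Matrix n n ℝ) : Matrix n n ℝ :=
  fun i j => if i = j then M i i else -|M i j|

theorem split_sum' {n : ℕ} (i : Fin n) (f : Fin n → ℝ) :
    ∑ j, f j = f i + ∑ j : {j : Fin n // j ≠ i}, f j := by
  rw [← Finset.add_sum_erase Finset.univ f (Finset.mem_univ i)]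
  congr 1
  exact Finset.sum_subtype _ (by simp) f

theorem term_le (a b c e g : ℝ) (hg : 0 ≤ g) (h : g ≤ c + e) :
    |a| * (-c - e) * |b| ≤ a * -g * b := by
  have h2 : a * b * g ≤ |a| * |b| * g := by
    refine mul_le_mul_of_nonneg_right ?_ hg
    rw [← abs_mul]; exact le_abs_self _
  have h3 : |a| * |b| * g ≤ |a| * |b| * (c + e) :=
    mul_le_mul_of_nonneg_left h (by positivity)
  nlinarith [h2, h3]

theorem comparison_schur_posSemidef
    {n : ℕ} (M : Matrix (Fin n) (Fin n) ℝ) (hsym : M.IsSymm)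
    (hcmp : (comparisonMatrix M).PosSemidef)
    (i : Fin n) (hpos : 0 < M i i)
    (S : Matrix {j : Fin n // j ≠ i} {j : Fin n // j ≠ i} ℝ)
    (hS : ∀ j k : {j : Fin n // j ≠ i},
        S j k = M j k - M (j : Fin n) i * M i (k : Fin n) / M i i) :
    (comparisonMatrix S).PosSemidef := by
  set d := M i i with hd
  set A := comparisonMatrix M with hA
  have hM : ∀ j k : Fin n, M k j = M j k := fun j k => hsym.apply j k
  have hSsym : ∀ j k : {j : Fin n // j ≠ i}, S j k = S k j := by
    intro j k
    rw [hS, hS, hM (j : Fin n) (k : Fin n), hM i (k : Fin n), hM (j : Fin n) i]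
    ring
  -- entries of A
  have hAii : A i i = d := if_pos rfl
  have hAio : ∀ j : {j : Fin n // j ≠ i}, A i (j : Fin n) = -|M i (j : Fin n)| := fun j => if_neg (Ne.symm j.2)
  have hAoi : ∀ j : {j : Fin n // j ≠ i}, A (j : Fin n) i = A i (j : Fin n) := by
    intro j
    rw [hAio, show A (j : Fin n) i = -|M (j : Fin n) i| from if_neg j.2, hM i (j : Fin n)]
  have hAdiag : ∀ j : {j : Fin n // j ≠ i}, A (j : Fin n) (j : Fin n) = M (j : Fin n) (j : Fin n) := fun j => if_pos rfl
  have hAoff : ∀ j k : {j : Fin n // j ≠ i}, j ≠ k → A (j : Fin n) (k : Fin n) = -|M (j : Fin n) (k : Fin n)| :=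
    fun j k h => if_neg (fun hc => h (Subtype.ext hc))
  clear_value d A
  refine PosSemidef.of_dotProduct_mulVec_nonneg ?_ ?_
  · -- Hermitian
    ext j k
    simp only [conjTranspose_apply, star_trivial]
    by_cases h : j = k
    · subst h; rfl
    · show comparisonMatrix S k j = comparisonMatrix S j k
      simp only [comparisonMatrix, if_neg h, if_neg (Ne.symm h), hSsym j k]
  · intro x
    set u : {j : Fin n // j ≠ i} → ℝ := fun j => |x j| with hu
    set T : ℝ := ∑ k : {j : Fin n // j ≠ i}, A i (k : Fin n) * u k with hT
    set z : Fin n → ℝ := fun j => if h : j = i then -T / d else u ⟨j, h⟩ with hzdef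
    have hzi : z i = -T / d := dif_pos rfl
    have hzu : ∀ j : {j : Fin n // j ≠ i}, z (j : Fin n) = u j := fun j => dif_neg j.2
    have key := hcmp.dotProduct_mulVec_nonneg z
    have e1 : star z ⬝ᵥ (A *ᵥ z) = ∑ j, z j * ∑ k, A j k * z k := by
      simp [dotProduct, mulVec]
    have e2 : ∀ j : Fin n, ∑ k, A j k * z k
        = A j i * (-T / d) + ∑ k : {j : Fin n // j ≠ i}, A j (k : Fin n) * u k := by
      intro j
      rw [split_sum' i (fun k => A j k * z k), hzi]
      congr 1
      exact Finset.sum_congr rfl fun k _ => by rw [hzu]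
    have e3 : star z ⬝ᵥ (A *ᵥ z)
        = (∑ j : {j : Fin n // j ≠ i}, ∑ k : {j : Fin n // j ≠ i}, u j * A (j : Fin n) (k : Fin n) * u k) - T * T / d := by
      rw [e1, split_sum' i (fun j => z j * ∑ k, A j k * z k), hzi, e2 i, hAii]
      have e4 : ∑ j : {j : Fin n // j ≠ i}, z (j : Fin n) * (∑ k, A (j : Fin n) k * z k)
          = ∑ j : {j : Fin n // j ≠ i}, (u j * A i (j : Fin n) * (-T / d)
              + ∑ k : {j : Fin n // j ≠ i}, u j * A (j : Fin n) (k : Fin n) * u k) := by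
        refine Finset.sum_congr rfl fun j _ => ?_
        rw [hzu, e2, hAoi, mul_add, Finset.mul_sum]
        ring_nf
      rw [e4, Finset.sum_add_distrib]
      have e5 : ∑ j : {j : Fin n // j ≠ i}, u j * A i (j : Fin n) * (-T / d) = T * (-T / d) := by
        rw [← Finset.sum_mul]
        congr 1
        exact Finset.sum_congr rfl fun j _ => mul_comm _ _
      rw [e5]
      field_simp
      ring
    have key2 : 0 ≤ (∑ j : {j : Fin n // j ≠ i}, ∑ k : {j : Fin n // j ≠ i}, u j * A (j : Fin n) (k : Fin n) * u k) - T * T / d := by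
      rw [← e3]; exact key
    -- expand the goal quadratic form
    have egoal : star x ⬝ᵥ (comparisonMatrix S *ᵥ x)
        = ∑ j : {j : Fin n // j ≠ i}, ∑ k : {j : Fin n // j ≠ i}, x j * comparisonMatrix S j k * x k := by
      simp [dotProduct, mulVec, Finset.mul_sum, mul_assoc]
    rw [egoal]
    -- rewrite the lower bound sum
    have hTT : T * T / d = ∑ j : {j : Fin n // j ≠ i}, ∑ k : {j : Fin n // j ≠ i}, u j * (A i (j : Fin n) * A i (k : Fin n) / d) * u k := by
      rw [hT, Finset.sum_mul_sum]
      rw [Finset.sum_div]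
      refine Finset.sum_congr rfl fun j _ => ?_
      rw [Finset.sum_div]
      refine Finset.sum_congr rfl fun k _ => ?_
      ring
    have key3 : 0 ≤ ∑ j : {j : Fin n // j ≠ i}, ∑ k : {j : Fin n // j ≠ i},
        (u j * A (j : Fin n) (k : Fin n) * u k - u j * (A i (j : Fin n) * A i (k : Fin n) / d) * u k) := by
      have := key2
      rw [hTT, ← Finset.sum_sub_distrib] at this
      convert this using 1
      exact Finset.sum_congr rfl fun j _ => Finset.sum_sub_distrib _ _
    refine le_trans key3 (Finset.sum_le_sum fun j _ => Finset.sum_le_sum fun k _ => ?_)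
    by_cases hjk : j = k
    · subst hjk
      have hCS : comparisonMatrix S j j = S j j := if_pos rfl
      rw [hCS, hS, hAdiag, hAio, hM i (j : Fin n)]
      have habs : |x j| * |x j| = x j * x j := abs_mul_abs_self _
      have habs2 : |M (j : Fin n) i| * |M (j : Fin n) i| = M (j : Fin n) i * M (j : Fin n) i :=
        abs_mul_abs_self _
      simp only [hu]
      rw [show M i (j : Fin n) = M (j : Fin n) i from hM (j : Fin n) i]
      refine le_of_eq ?_
      linear_combination (M (j : Fin n) (j : Fin n) - |M (j : Fin n) i| * |M (j : Fin n) i| / d) * habs - (x j * x j / d) * habs2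
    · have hCS : comparisonMatrix S j k = -|S j k| := if_neg hjk
      rw [hCS, hAoff j k hjk, hAio, hAio]
      have h1 : |S j k| ≤ |M (j : Fin n) (k : Fin n)| + |M i (j : Fin n)| * |M i (k : Fin n)| / d := by
        rw [hS]
        calc |M (j : Fin n) (k : Fin n) - M (j : Fin n) i * M i (k : Fin n) / d|
            ≤ |M (j : Fin n) (k : Fin n)| + |M (j : Fin n) i * M i (k : Fin n) / d| := abs_sub _ _
          _ = |M (j : Fin n) (k : Fin n)| + |M i (j : Fin n)| * |M i (k : Fin n)| / d := by
              rw [abs_div, abs_mul, abs_of_pos hpos, hM i (j : Fin n)]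
      have h2 : x j * x k ≤ |x j| * |x k| := by
        rw [← abs_mul]; exact le_abs_self _
      have h3 : (0:ℝ) ≤ |x j| * |x k| := mul_nonneg (abs_nonneg _) (abs_nonneg _)
      simp only [hu]
      have key4 := term_le (x j) (x k) |M (j : Fin n) (k : Fin n)|
        (|M i (j : Fin n)| * |M i (k : Fin n)| / d) |S j k| (abs_nonneg _) h1
      exact le_trans (le_of_eq (by ring)) key4
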